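/- Let S_π = {z ∈ ℂ : 0 < Im z < π} and ℝ_π = {z ∈ ℂ : Im z = π}. Let c ∈ ℝ and let K ⊆ S_π be relatively closed in S_π with Re z ≤ c for all z ∈ K and with S_π∖K simply connected. Let V be a continuous complex-valued function on (S_π∖K) ∪ (c,∞) ∪ ((c,∞)+πi) that is holomorphic and injective on S_π∖K with V(S_π∖K) = S_π, satisfies Re V(z) → +∞ as Re z → +∞ with z ∈ S_π∖K, and satisfies V((c,∞)) ⊆ ℝ and V((c,∞)+πi) ⊆ ℝ_π. Then there exists h ∈ ℝ such that for every z in the domain of V with Re z ≥ c + ln 4, one has |V(z) − z − h| ≤ 12 e^{c − Re z}. -/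

import Mathlib

open Complex Set Metric intervalIntegral
open scoped Interval Real Topology

noncomputable section

lemma hintegrable {f : ℂ → ℂ} {s : Set ℂ} (hc : ContinuousOn f s) {y p q : ℝ}
    (hsub : ∀ t ∈ [[p, q]], (t : ℂ) + y * I ∈ s) :
    IntervalIntegrable (fun t : ℝ => f (t + y * I)) MeasureTheory.volume p q := by
  apply ContinuousOn.intervalIntegrable
  exact hc.comp (Continuous.continuousOn (by continuity)) hsub

lemma vintegrable {f : ℂ → ℂ} {s : Set ℂ} (hc : ContinuousOn f s) {x p q : ℝ}
    (hsub : ∀ t ∈ [[p, q]], (x : ℂ) + t * I ∈ s) :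
    IntervalIntegrable (fun t : ℝ => f (x + t * I)) MeasureTheory.volume p q := by
  apply ContinuousOn.intervalIntegrable
  exact hc.comp (Continuous.continuousOn (by continuity)) hsub

lemma mem_rect {x₁ x₂ y₁ y₂ t u : ℝ} (ht : t ∈ [[x₁, x₂]]) (hu : u ∈ [[y₁, y₂]]) :
    (t : ℂ) + u * I ∈ [[x₁, x₂]] ×ℂ [[y₁, y₂]] := by
  constructor <;> simp [ht, hu]

lemma rectZeroAux {f : ℂ → ℂ} {s : Set ℂ} (hc : ContinuousOn f s)
    (hd : ∀ z ∈ s, z.im ≠ 0 → DifferentiableAt ℂ f z)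
    (x₁ x₂ y₁ y₂ : ℝ) (hsub : [[x₁, x₂]] ×ℂ [[y₁, y₂]] ⊆ s)
    (h0 : 0 ∉ Ioo (min y₁ y₂) (max y₁ y₂)) :
    (∫ x : ℝ in x₁..x₂, f (x + y₁ * I)) - (∫ x : ℝ in x₁..x₂, f (x + y₂ * I)) +
      I • (∫ y : ℝ in y₁..y₂, f (x₂ + y * I)) -
      I • (∫ y : ℝ in y₁..y₂, f (x₁ + y * I)) = 0 := by
  have := Complex.integral_boundary_rect_eq_zero_of_differentiable_on_off_countable f
    (⟨x₁, y₁⟩ : ℂ) (⟨x₂, y₂⟩ : ℂ) ∅ countable_empty ?_ ?_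
  · simpa using this
  · exact hc.mono hsub
  · rintro z ⟨hz, -⟩
    have hzs : z ∈ s := by
      apply hsub
      exact ⟨Ioo_subset_Icc_self hz.1, Ioo_subset_Icc_self hz.2⟩
    refine hd z hzs fun h => h0 ?_
    rw [← h]; exact hz.2

lemma rectZero {f : ℂ → ℂ} {s : Set ℂ} (hc : ContinuousOn f s)
    (hd : ∀ z ∈ s, z.im ≠ 0 → DifferentiableAt ℂ f z)
    (x₁ x₂ y₁ y₂ : ℝ) (hsub : [[x₁, x₂]] ×ℂ [[y₁, y₂]] ⊆ s) :
    (∫ x : ℝ in x₁..x₂, f (x + y₁ * I)) - (∫ x : ℝ in x₁..x₂, f (x + y₂ * I)) +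
      I • (∫ y : ℝ in y₁..y₂, f (x₂ + y * I)) -
      I • (∫ y : ℝ in y₁..y₂, f (x₁ + y * I)) = 0 := by
  by_cases h0 : 0 ∈ Ioo (min y₁ y₂) (max y₁ y₂)
  · have h0' : (0 : ℝ) ∈ [[y₁, y₂]] := Ioo_subset_Icc_self h0
    have hsub1 : [[x₁, x₂]] ×ℂ [[y₁, (0:ℝ)]] ⊆ s :=
      fun z hz => hsub (by rw [mem_reProdIm] at hz ⊢; exact ⟨hz.1, uIcc_subset_uIcc left_mem_uIcc h0' hz.2⟩)
    have hsub2 : [[x₁, x₂]] ×ℂ [[(0:ℝ), y₂]] ⊆ s :=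
      fun z hz => hsub (by rw [mem_reProdIm] at hz ⊢; exact ⟨hz.1, uIcc_subset_uIcc h0' right_mem_uIcc hz.2⟩)
    have h1 := rectZeroAux hc hd x₁ x₂ y₁ 0 hsub1 (by
      rintro ⟨ha, hb⟩
      rcases min_lt_iff.1 ha with h | h
      · rcases lt_max_iff.1 hb with h' | h' <;> linarith
      · linarith)
    have h2 := rectZeroAux hc hd x₁ x₂ 0 y₂ hsub2 (by
      rintro ⟨ha, hb⟩
      rcases min_lt_iff.1 ha with h | h
      · linarith
      · rcases lt_max_iff.1 hb with h' | h' <;> linarith)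
    have iv2 : IntervalIntegrable (fun t : ℝ => f (x₂ + t * I)) MeasureTheory.volume y₁ 0 :=
      vintegrable hc fun t ht => hsub (mem_rect right_mem_uIcc (uIcc_subset_uIcc left_mem_uIcc h0' ht))
    have iv2' : IntervalIntegrable (fun t : ℝ => f (x₂ + t * I)) MeasureTheory.volume 0 y₂ :=
      vintegrable hc fun t ht => hsub (mem_rect right_mem_uIcc (uIcc_subset_uIcc h0' right_mem_uIcc ht))
    have iv1 : IntervalIntegrable (fun t : ℝ => f (x₁ + t * I)) MeasureTheory.volume y₁ 0 :=
      vintegrable hc fun t ht => hsub (mem_rect left_mem_uIcc (uIcc_subset_uIcc left_mem_uIcc h0' ht))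
    have iv1' : IntervalIntegrable (fun t : ℝ => f (x₁ + t * I)) MeasureTheory.volume 0 y₂ :=
      vintegrable hc fun t ht => hsub (mem_rect left_mem_uIcc (uIcc_subset_uIcc h0' right_mem_uIcc ht))
    have e2 := integral_add_adjacent_intervals iv2 iv2'
    have e1 := integral_add_adjacent_intervals iv1 iv1'
    rw [← e1, ← e2]
    rw [smul_add, smul_add]
    have := h1
    have := h2
    linear_combination h1 + h2
  · exact rectZeroAux hc hd x₁ x₂ y₁ y₂ hsub h0

lemma abs_sub_le_of_uIoc {a b t : ℝ} (ht : t ∈ Ι a b) : |t - a| ≤ |b - a| := by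
  rcases Set.mem_uIoc.mp ht with ⟨h1, h2⟩ | ⟨h1, h2⟩
  · rw [_root_.abs_of_nonneg (by linarith)]
    exact (le_abs_self _).trans' (by linarith)
  · rw [_root_.abs_of_nonpos (by linarith)]
    exact (neg_le_abs _).trans' (by linarith)

lemma moreraOffReal {f : ℂ → ℂ} {s : Set ℂ} (hs : IsOpen s) (hc : ContinuousOn f s)
    (hd : ∀ z ∈ s, z.im ≠ 0 → DifferentiableAt ℂ f z) : DifferentiableOn ℂ f s := by
  intro z₀ hz₀
  suffices h : DifferentiableAt ℂ f z₀ from h.differentiableWithinAt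
  obtain ⟨δ, hδ, hball⟩ := Metric.isOpen_iff.1 hs z₀ hz₀
  set r := δ / 3 with hrdef
  have hrpos : 0 < r := by positivity
  set x₀ := z₀.re with hx₀
  set y₀ := z₀.im with hy₀
  have hQ : ∀ {t u : ℝ}, |t - x₀| ≤ r → |u - y₀| ≤ r → (t : ℂ) + u * I ∈ s := by
    intro t u ht hu
    apply hball
    rw [mem_ball, dist_eq]
    calc norm ((t : ℂ) + u * I - z₀)
        ≤ |((t : ℂ) + u * I - z₀).re| + |((t : ℂ) + u * I - z₀).im| :=
          Complex.norm_le_abs_re_add_abs_im _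
      _ = |t - z₀.re| + |u - z₀.im| := by
          rw [show ((t : ℂ) + u * I - z₀).re = t - z₀.re by simp,
            show ((t : ℂ) + u * I - z₀).im = u - z₀.im by simp]
      _ ≤ r + r := add_le_add ht hu
      _ < δ := by rw [hrdef]; linarith
  have habsx : ∀ {t : ℝ}, t ∈ Icc (x₀ - r) (x₀ + r) → |t - x₀| ≤ r := by
    rintro t ⟨h1, h2⟩; rw [abs_le]; constructor <;> linarith
  have habsy : ∀ {t : ℝ}, t ∈ Icc (y₀ - r) (y₀ + r) → |t - y₀| ≤ r := by
    rintro t ⟨h1, h2⟩; rw [abs_le]; constructor <;> linarith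
  have hIccx : ∀ {a b : ℝ}, a ∈ Icc (x₀ - r) (x₀ + r) → b ∈ Icc (x₀ - r) (x₀ + r) →
      ∀ t ∈ [[a, b]], t ∈ Icc (x₀ - r) (x₀ + r) := by
    intro a b ha hb t ht
    have : [[a, b]] ⊆ [[x₀ - r, x₀ + r]] := uIcc_subset_uIcc
      (by rw [uIcc_of_le (by linarith)]; exact ha) (by rw [uIcc_of_le (by linarith)]; exact hb)
    have := this ht
    rwa [uIcc_of_le (by linarith)] at this
  have hIccy : ∀ {a b : ℝ}, a ∈ Icc (y₀ - r) (y₀ + r) → b ∈ Icc (y₀ - r) (y₀ + r) →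
      ∀ t ∈ [[a, b]], t ∈ Icc (y₀ - r) (y₀ + r) := by
    intro a b ha hb t ht
    have : [[a, b]] ⊆ [[y₀ - r, y₀ + r]] := uIcc_subset_uIcc
      (by rw [uIcc_of_le (by linarith)]; exact ha) (by rw [uIcc_of_le (by linarith)]; exact hb)
    have := this ht
    rwa [uIcc_of_le (by linarith)] at this
  have hInt : ∀ {p q y : ℝ}, p ∈ Icc (x₀ - r) (x₀ + r) → q ∈ Icc (x₀ - r) (x₀ + r) →
      y ∈ Icc (y₀ - r) (y₀ + r) →
      IntervalIntegrable (fun t : ℝ => f (t + y * I)) MeasureTheory.volume p q := by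
    intro p q y hp hq hy
    exact hintegrable hc fun t ht => hQ (habsx (hIccx hp hq t ht)) (habsy hy)
  have hVInt : ∀ {p q x : ℝ}, p ∈ Icc (y₀ - r) (y₀ + r) → q ∈ Icc (y₀ - r) (y₀ + r) →
      x ∈ Icc (x₀ - r) (x₀ + r) →
      IntervalIntegrable (fun t : ℝ => f (x + t * I)) MeasureTheory.volume p q := by
    intro p q x hp hq hx
    exact vintegrable hc fun t ht => hQ (habsx hx) (habsy (hIccy hp hq t ht))
  have hQsub : ∀ {a b u v : ℝ}, a ∈ Icc (x₀ - r) (x₀ + r) → b ∈ Icc (x₀ - r) (x₀ + r) →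
      u ∈ Icc (y₀ - r) (y₀ + r) → v ∈ Icc (y₀ - r) (y₀ + r) →
      [[a, b]] ×ℂ [[u, v]] ⊆ s := by
    intro a b u v ha hb hu hv z hz
    rw [mem_reProdIm] at hz
    rw [← re_add_im z]
    exact hQ (habsx (hIccx ha hb _ hz.1)) (habsy (hIccy hu hv _ hz.2))
  set U : Set ℂ := Ioo (x₀ - r) (x₀ + r) ×ℂ Ioo (y₀ - r) (y₀ + r) with hUdef
  have hUopen : IsOpen U := isOpen_Ioo.reProdIm isOpen_Ioo
  have hUmem : ∀ {w : ℂ}, w ∈ U → w.re ∈ Icc (x₀ - r) (x₀ + r) ∧ w.im ∈ Icc (y₀ - r) (y₀ + r) := by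
    intro w hw
    rw [hUdef, mem_reProdIm] at hw
    exact ⟨Ioo_subset_Icc_self hw.1, Ioo_subset_Icc_self hw.2⟩
  have hx₀mem : x₀ ∈ Icc (x₀ - r) (x₀ + r) := ⟨by linarith, by linarith⟩
  have hy₀mem : y₀ ∈ Icc (y₀ - r) (y₀ + r) := ⟨by linarith, by linarith⟩
  have hUs : U ⊆ s := by
    intro w hw
    rw [← re_add_im w]
    exact hQ (habsx (hUmem hw).1) (habsy (hUmem hw).2)
  set F : ℂ → ℂ := fun w =>
    (∫ t : ℝ in x₀..w.re, f (t + y₀ * I)) + I * ∫ t : ℝ in y₀..w.im, f (w.re + t * I) with hFdef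
  have key : ∀ w₁ ∈ U, HasDerivAt F (f w₁) w₁ := by
    intro w₁ hw₁
    obtain ⟨hx₁, hy₁⟩ := hUmem hw₁
    have identity : ∀ w ∈ U, F w - F w₁ =
        (∫ t : ℝ in w₁.re..w.re, f (t + w₁.im * I)) +
          I * ∫ t : ℝ in w₁.im..w.im, f (w.re + t * I) := by
      intro w hw
      obtain ⟨hx, hy⟩ := hUmem hw
      have step1 : (∫ t : ℝ in x₀..w₁.re, f (t + y₀ * I)) +
          (∫ t : ℝ in w₁.re..w.re, f (t + y₀ * I)) = ∫ t : ℝ in x₀..w.re, f (t + y₀ * I) :=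
        integral_add_adjacent_intervals (hInt hx₀mem hx₁ hy₀mem) (hInt hx₁ hx hy₀mem)
      have step3 : (∫ t : ℝ in y₀..w₁.im, f (w.re + t * I)) +
          (∫ t : ℝ in w₁.im..w.im, f (w.re + t * I)) = ∫ t : ℝ in y₀..w.im, f (w.re + t * I) :=
        integral_add_adjacent_intervals (hVInt hy₀mem hy₁ hx) (hVInt hy₁ hy hx)
      have step2 := rectZero hc hd w₁.re w.re y₀ w₁.im (hQsub hx₁ hx hy₀mem hy₁)
      rw [smul_eq_mul, smul_eq_mul] at step2
      rw [hFdef]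
      simp only []
      linear_combination step2 - step1 - I * step3
    rw [hasDerivAt_iff_isLittleO, Asymptotics.isLittleO_iff]
    intro ε hε
    have hcont₁ : ContinuousAt f w₁ := hc.continuousAt (hs.mem_nhds (hUs hw₁))
    obtain ⟨δ₁, hδ₁pos, hδ₁⟩ := Metric.continuousAt_iff.1 hcont₁ (ε / 2) (by linarith)
    filter_upwards [hUopen.mem_nhds hw₁, Metric.ball_mem_nhds w₁ (show (0:ℝ) < δ₁ / 2 by linarith)]
      with w hwU hwb
    obtain ⟨hx, hy⟩ := hUmem hwU
    have hwd : norm (w - w₁) < δ₁ / 2 := by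
      rw [mem_ball, dist_eq] at hwb; exact hwb
    have hxd : |w.re - w₁.re| ≤ norm (w - w₁) := by
      have := Complex.abs_re_le_norm (w - w₁); simpa using this
    have hyd : |w.im - w₁.im| ≤ norm (w - w₁) := by
      have := Complex.abs_im_le_norm (w - w₁); simpa using this
    have hsplit : F w - F w₁ - (w - w₁) • f w₁ =
        (∫ t : ℝ in w₁.re..w.re, (f (t + w₁.im * I) - f w₁)) +
          I * ∫ t : ℝ in w₁.im..w.im, (f (w.re + t * I) - f w₁) := by
      rw [identity w hwU]
      rw [intervalIntegral.integral_sub (hInt hx₁ hx hy₁) intervalIntegrable_const,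
        intervalIntegral.integral_sub (hVInt hy₁ hy hx) intervalIntegrable_const,
        intervalIntegral.integral_const, intervalIntegral.integral_const]
      have hww : w - w₁ = ((w.re - w₁.re : ℝ) : ℂ) + ((w.im - w₁.im : ℝ) : ℂ) * I := by
        simp [Complex.ext_iff]
      rw [smul_eq_mul, hww, Complex.real_smul, Complex.real_smul]
      push_cast
      ring
    rw [hsplit]
    have hb1 : ‖∫ t : ℝ in w₁.re..w.re, (f (t + w₁.im * I) - f w₁)‖ ≤
        ε / 2 * |w.re - w₁.re| := by
      apply intervalIntegral.norm_integral_le_of_norm_le_const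
      intro t ht
      have hdist : dist ((t : ℂ) + w₁.im * I) w₁ < δ₁ := by
        rw [dist_eq]
        have : (t : ℂ) + w₁.im * I - w₁ = ((t - w₁.re : ℝ) : ℂ) := by
          simp [Complex.ext_iff]
        rw [this, Complex.norm_real, Real.norm_eq_abs]
        calc |t - w₁.re| ≤ |w.re - w₁.re| := abs_sub_le_of_uIoc ht
          _ ≤ norm (w - w₁) := hxd
          _ < δ₁ := by linarith
      have := hδ₁ hdist
      rw [dist_eq_norm] at this
      exact this.le
    have hb2 : ‖∫ t : ℝ in w₁.im..w.im, (f (w.re + t * I) - f w₁)‖ ≤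
        ε / 2 * |w.im - w₁.im| := by
      apply intervalIntegral.norm_integral_le_of_norm_le_const
      intro t ht
      have hdist : dist ((w.re : ℂ) + t * I) w₁ < δ₁ := by
        rw [dist_eq]
        calc norm ((w.re : ℂ) + t * I - w₁)
            ≤ |((w.re : ℂ) + t * I - w₁).re| + |((w.re : ℂ) + t * I - w₁).im| :=
              Complex.norm_le_abs_re_add_abs_im _
          _ = |w.re - w₁.re| + |t - w₁.im| := by
              rw [show ((w.re : ℂ) + t * I - w₁).re = w.re - w₁.re by simp,
                show ((w.re : ℂ) + t * I - w₁).im = t - w₁.im by simp]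
          _ ≤ norm (w - w₁) + |w.im - w₁.im| :=
              add_le_add hxd (abs_sub_le_of_uIoc ht)
          _ ≤ norm (w - w₁) + norm (w - w₁) := by gcongr
          _ < δ₁ := by linarith
      have := hδ₁ hdist
      rw [dist_eq_norm] at this
      exact this.le
    calc ‖(∫ t : ℝ in w₁.re..w.re, (f (t + w₁.im * I) - f w₁)) +
          I * ∫ t : ℝ in w₁.im..w.im, (f (w.re + t * I) - f w₁)‖
        ≤ ‖∫ t : ℝ in w₁.re..w.re, (f (t + w₁.im * I) - f w₁)‖ +
          ‖I * ∫ t : ℝ in w₁.im..w.im, (f (w.re + t * I) - f w₁)‖ := norm_add_le _ _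
      _ = ‖∫ t : ℝ in w₁.re..w.re, (f (t + w₁.im * I) - f w₁)‖ +
          ‖∫ t : ℝ in w₁.im..w.im, (f (w.re + t * I) - f w₁)‖ := by
          rw [norm_mul]; simp
      _ ≤ ε / 2 * |w.re - w₁.re| + ε / 2 * |w.im - w₁.im| := by gcongr
      _ ≤ ε / 2 * norm (w - w₁) + ε / 2 * norm (w - w₁) :=
          add_le_add (mul_le_mul_of_nonneg_left hxd (by positivity))
            (mul_le_mul_of_nonneg_left hyd (by positivity))
      _ = ε * ‖w - w₁‖ := by ring
  have hFd : DifferentiableOn ℂ F U := fun w hw => ((key w hw).differentiableAt).differentiableWithinAt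
  have hz₀U : z₀ ∈ U := by
    rw [hUdef, mem_reProdIm]
    constructor <;> constructor <;> simp only [← hx₀, ← hy₀] <;> linarith
  have han : AnalyticOnNhd ℂ (deriv F) U := (hFd.analyticOnNhd hUopen).deriv
  have hDF : DifferentiableAt ℂ (deriv F) z₀ := (han z₀ hz₀U).differentiableAt
  apply hDF.congr_of_eventuallyEq
  filter_upwards [hUopen.mem_nhds hz₀U] with w hw
  exact ((key w hw).deriv).symm

lemma conjReflectDifferentiableAt {f : ℂ → ℂ} {z : ℂ}
    (hf : DifferentiableAt ℂ f ((starRingEnd ℂ) z)) :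
    DifferentiableAt ℂ (fun w => (starRingEnd ℂ) (f ((starRingEnd ℂ) w))) z := by
  set d := deriv f ((starRingEnd ℂ) z) with hd
  have key : HasDerivAt (fun w => (starRingEnd ℂ) (f ((starRingEnd ℂ) w))) ((starRingEnd ℂ) d) z := by
    rw [hasDerivAt_iff_tendsto]
    have h1 := hasDerivAt_iff_tendsto.1 hf.hasDerivAt
    have h2 := h1.comp ((Complex.continuous_conj).tendsto z)
    have heq : (fun w : ℂ => ‖w - z‖⁻¹ * ‖(starRingEnd ℂ) (f ((starRingEnd ℂ) w)) -
          (starRingEnd ℂ) (f ((starRingEnd ℂ) z)) - (w - z) • (starRingEnd ℂ) d‖) =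
        (fun u : ℂ => ‖u - (starRingEnd ℂ) z‖⁻¹ *
          ‖f u - f ((starRingEnd ℂ) z) - (u - (starRingEnd ℂ) z) • d‖) ∘ (starRingEnd ℂ) := by
      funext w
      simp only [Function.comp_apply, smul_eq_mul]
      rw [show (starRingEnd ℂ) (f ((starRingEnd ℂ) w)) - (starRingEnd ℂ) (f ((starRingEnd ℂ) z)) -
            (w - z) * (starRingEnd ℂ) d =
          (starRingEnd ℂ) (f ((starRingEnd ℂ) w) - f ((starRingEnd ℂ) z) -
            ((starRingEnd ℂ) w - (starRingEnd ℂ) z) * d) by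
        simp only [map_sub, map_mul]; simp]
      rw [show (w - z : ℂ) = (starRingEnd ℂ) ((starRingEnd ℂ) w - (starRingEnd ℂ) z) by
        simp only [map_sub]; simp]
      rw [RCLike.norm_conj, RCLike.norm_conj]
    rw [heq]
    exact h2
  exact key.differentiableAt

section Aux

lemma cayley_lt_one {E : ℂ} (hE : 0 < E.re) :
    norm ((E - 1) / (E + 1)) < 1 ∧ E + 1 ≠ 0 := by
  have h1 : E + 1 ≠ 0 := by
    intro h
    have : (E + 1).re = 0 := by rw [h]; simp
    simp only [add_re, one_re] at this
    linarith
  refine ⟨?_, h1⟩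
  rw [norm_div, div_lt_one (norm_pos_iff.mpr h1)]
  have hn : Complex.normSq (E - 1) < Complex.normSq (E + 1) := by
    simp only [Complex.normSq_apply, sub_re, sub_im, add_re, add_im, one_re, one_im]
    nlinarith
  have := Real.sqrt_lt_sqrt (Complex.normSq_nonneg _) hn
  rwa [← Complex.norm_def, ← Complex.norm_def] at this
  
lemma mobius_lt_one {a : ℝ} {b : ℂ} (ha : |a| < 1) (hb : norm b < 1) :
    (1 : ℂ) - (a : ℂ) * b ≠ 0 ∧ norm ((b - a) / (1 - (a : ℂ) * b)) < 1 := by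
  have habs : norm ((a : ℂ) * b) < 1 := by
    rw [norm_mul, Complex.norm_real, Real.norm_eq_abs]
    calc |a| * norm b ≤ |a| * 1 := by
          apply mul_le_mul_of_nonneg_left hb.le (abs_nonneg a)
      _ < 1 := by rwa [mul_one]
  have hne : (1 : ℂ) - (a : ℂ) * b ≠ 0 := by
    intro h
    have : (a : ℂ) * b = 1 := by linear_combination -h
    rw [this] at habs
    simp at habs
  refine ⟨hne, ?_⟩
  rw [norm_div, div_lt_one (norm_pos_iff.mpr hne)]
  have hn : Complex.normSq (b - a) < Complex.normSq (1 - (a : ℂ) * b) := by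
    simp only [Complex.normSq_apply, sub_re, sub_im, mul_re, mul_im, one_re, one_im,
      ofReal_re, ofReal_im]
    have hb2 : b.re ^ 2 + b.im ^ 2 < 1 := by
      have := Complex.sq_norm b
      rw [Complex.normSq_apply] at this
      nlinarith [norm_nonneg b]
    have ha' := abs_lt.mp ha
    have key : 0 < (1 - a ^ 2) * (1 - (b.re ^ 2 + b.im ^ 2)) :=
      mul_pos (by nlinarith) (by nlinarith)
    nlinarith [key]
  have := Real.sqrt_lt_sqrt (Complex.normSq_nonneg _) hn
  rwa [← Complex.norm_def, ← Complex.norm_def] at this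

end Aux

set_option maxHeartbeats 1000000 in
theorem halfStripBound {c : ℝ} {V : ℂ → ℂ}
    (hcontD : ContinuousOn V {z : ℂ | c < z.re ∧ 0 ≤ z.im ∧ z.im ≤ Real.pi})
    (hdiffD : ∀ z : ℂ, c < z.re → 0 < z.im → z.im < Real.pi → DifferentiableAt ℂ V z)
    (him : ∀ z : ℂ, c < z.re → 0 < z.im → z.im < Real.pi →
      0 < (V z).im ∧ (V z).im < Real.pi)
    (hlow : ∀ z : ℂ, z.im = 0 → c < z.re → (V z).im = 0)
    (hup : ∀ z : ℂ, z.im = Real.pi → c < z.re → (V z).im = Real.pi) :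
    ∃ h : ℝ, ∀ z : ℂ, c < z.re → 0 ≤ z.im → z.im ≤ Real.pi → c + Real.log 4 ≤ z.re →
      norm (V z - z - (h : ℂ)) ≤ 12 * Real.exp (c - z.re) := by
  set u : ℂ → ℂ := fun w => V (Complex.log w) - Complex.log w with hu
  set g : ℂ → ℂ := fun w => if 0 ≤ w.im then u w else (starRingEnd ℂ) (u ((starRingEnd ℂ) w))
    with hg
  set Ω : Set ℂ := {w : ℂ | Real.exp c < norm w} with hΩ
  have hΩopen : IsOpen Ω := isOpen_lt continuous_const continuous_norm
  -- F1 : log of upper part of Ω lands in the half-strip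
  have hF1 : ∀ w : ℂ, w ∈ Ω → 0 ≤ w.im →
      c < (Complex.log w).re ∧ 0 ≤ (Complex.log w).im ∧ (Complex.log w).im ≤ Real.pi := by
    intro w hw him'
    have hw0 : w ≠ 0 := by
      intro h
      rw [h] at hw
      simp [hΩ] at hw
      exact absurd hw (not_lt.2 (Real.exp_pos c).le)
    refine ⟨?_, ?_, ?_⟩
    · rw [Complex.log_re]
      exact (Real.lt_log_iff_exp_lt (norm_pos_iff.mpr hw0)).2 hw
    · rw [Complex.log_im]
      exact Complex.arg_nonneg_iff.2 him'
    · rw [Complex.log_im]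
      exact Complex.arg_le_pi w
  -- F1' : strict interior
  have hF1' : ∀ w : ℂ, w ∈ Ω → 0 < w.im →
      0 < (Complex.log w).im ∧ (Complex.log w).im < Real.pi := by
    intro w hw him'
    have h1 := hF1 w hw him'.le
    rcases h1 with ⟨h1, h2, h3⟩
    constructor
    · rcases h2.lt_or_eq with h | h
      · exact h
      · exfalso
        rw [Complex.log_im] at h
        have := Complex.arg_eq_zero_iff.1 h.symm
        exact him'.ne' this.2
    · rcases h3.lt_or_eq with h | h
      · exact h
      · exfalso
        rw [Complex.log_im] at h
        have := Complex.arg_eq_pi_iff.1 h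
        exact him'.ne' this.2
  -- F2 : real values on the real axis
  have hF2 : ∀ w : ℂ, w ∈ Ω → w.im = 0 → (u w).im = 0 := by
    intro w hw him'
    have hw0 : w ≠ 0 := by
      intro h; rw [h] at hw; simp [hΩ] at hw
      exact absurd hw (not_lt.2 (Real.exp_pos c).le)
    have hre := (hF1 w hw him'.ge).1
    rcases lt_or_ge 0 w.re with h | h
    · have harg : (Complex.log w).im = 0 := by
        rw [Complex.log_im]
        exact Complex.arg_eq_zero_iff.2 ⟨h.le, him'⟩
      have := hlow (Complex.log w) harg hre
      simp only [hu, sub_im, this, harg, sub_zero]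
    · have hreneg : w.re < 0 := by
        rcases h.lt_or_eq with h' | h'
        · exact h'
        · exfalso
          apply hw0
          apply Complex.ext
          · rw [Complex.zero_re]; exact h'
          · rw [Complex.zero_im]; exact him'
      have harg : (Complex.log w).im = Real.pi := by
        rw [Complex.log_im]
        exact Complex.arg_eq_pi_iff.2 ⟨hreneg, him'⟩
      have := hup (Complex.log w) harg hre
      simp only [hu, sub_im, this, harg, sub_self]
  -- conj maps Ω to Ω
  have hconjΩ : ∀ w : ℂ, w ∈ Ω → (starRingEnd ℂ) w ∈ Ω := by
    intro w hw
    simpa [hΩ] using hw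
  -- g = u on upper
  have hgu : ∀ w : ℂ, 0 ≤ w.im → g w = u w := by
    intro w h
    simp only [hg, if_pos h]
  have hgl : ∀ w : ℂ, w ∈ Ω → w.im ≤ 0 → g w = (starRingEnd ℂ) (u ((starRingEnd ℂ) w)) := by
    intro w hw h
    rcases lt_or_eq_of_le h with h' | h'
    · simp only [hg, if_neg (not_le.2 h')]
    · have h0 : w.im = 0 := h'
      rw [hgu w h0.ge]
      have hcw : (starRingEnd ℂ) w = w := Complex.conj_eq_iff_im.2 h0
      rw [hcw]
      exact (Complex.conj_eq_iff_im.2 (hF2 w hw h0)).symm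
  -- F3 : symmetry
  have hsym : ∀ w ∈ Ω, g ((starRingEnd ℂ) w) = (starRingEnd ℂ) (g w) := by
    intro w hw
    rcases lt_trichotomy 0 w.im with h | h | h
    · rw [hgl ((starRingEnd ℂ) w) (hconjΩ w hw) (by simp [Complex.conj_im]; exact h.le)]
      rw [Complex.conj_conj, hgu w h.le]
    · have hcw : (starRingEnd ℂ) w = w := Complex.conj_eq_iff_im.2 h.symm
      rw [hcw, hgu w h.le]
      exact (Complex.conj_eq_iff_im.2 (hF2 w hw h.symm)).symm
    · rw [hgu ((starRingEnd ℂ) w) (by simp [Complex.conj_im]; exact h.le)]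
      rw [hgl w hw h.le, Complex.conj_conj]
  -- F4 : continuity of u on the closed upper part
  have hcu : ContinuousOn u (Ω ∩ {w : ℂ | 0 ≤ w.im}) := by
    intro w hw
    have hw0 : w ≠ 0 := by
      intro h
      have := hw.1
      rw [h] at this
      simp [hΩ] at this
      exact absurd this (not_lt.2 (Real.exp_pos c).le)
    have hlog : ContinuousWithinAt Complex.log (Ω ∩ {w : ℂ | 0 ≤ w.im}) w := by
      by_cases him0 : w.im = 0
      · rcases lt_trichotomy w.re 0 with h | h | h
        · exact (Complex.continuousWithinAt_log_of_re_neg_of_im_zero h him0).mono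
            inter_subset_right
        · exfalso
          apply hw0
          apply Complex.ext
          · rw [Complex.zero_re]; exact h
          · rw [Complex.zero_im]; exact him0
        · exact (continuousAt_clog (Complex.mem_slitPlane_iff.2 (Or.inl h))).continuousWithinAt
      · exact (continuousAt_clog (Complex.mem_slitPlane_iff.2 (Or.inr him0))).continuousWithinAt
    have hmaps : MapsTo Complex.log (Ω ∩ {w : ℂ | 0 ≤ w.im})
        {z : ℂ | c < z.re ∧ 0 ≤ z.im ∧ z.im ≤ Real.pi} := by
      intro x hx
      exact hF1 x hx.1 hx.2
    have hV : ContinuousWithinAt V {z : ℂ | c < z.re ∧ 0 ≤ z.im ∧ z.im ≤ Real.pi}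
        (Complex.log w) := hcontD _ (hF1 w hw.1 hw.2)
    exact ContinuousWithinAt.sub (hV.comp hlog hmaps) hlog
  have hclosed_up : IsClosed {w : ℂ | 0 ≤ w.im} :=
    isClosed_le continuous_const Complex.continuous_im
  have hclosed_lo : IsClosed {w : ℂ | w.im ≤ 0} :=
    isClosed_le Complex.continuous_im continuous_const
  have hcg : ContinuousOn g Ω := by
    intro w hw
    have hsplit : Ω ⊆ (Ω ∩ {w : ℂ | 0 ≤ w.im}) ∪ (Ω ∩ {w : ℂ | w.im ≤ 0}) := by
      intro x hx
      rcases le_total 0 x.im with h | h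
      · exact Or.inl ⟨hx, h⟩
      · exact Or.inr ⟨hx, h⟩
    apply ContinuousWithinAt.mono _ hsplit
    apply ContinuousWithinAt.union
    · by_cases h : 0 ≤ w.im
      · exact (hcu w ⟨hw, h⟩).congr (fun x hx => hgu x hx.2) (hgu w h)
      · apply continuousWithinAt_of_notMem_closure
        intro hcl
        exact h ((closure_minimal inter_subset_right hclosed_up) hcl)
    · by_cases h : w.im ≤ 0
      · have hlower : ContinuousOn (fun x => (starRingEnd ℂ) (u ((starRingEnd ℂ) x)))
            (Ω ∩ {w : ℂ | w.im ≤ 0}) := by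
          apply Complex.continuous_conj.comp_continuousOn
          apply hcu.comp (Complex.continuous_conj.continuousOn)
          intro x hx
          refine ⟨hconjΩ x hx.1, ?_⟩
          have hx2 : x.im ≤ 0 := hx.2
          simp only [mem_setOf_eq, Complex.conj_im]
          linarith
        exact (hlower w ⟨hw, h⟩).congr (fun x hx => hgl x hx.1 hx.2) (hgl w hw h)
      · apply continuousWithinAt_of_notMem_closure
        intro hcl
        exact h ((closure_minimal inter_subset_right hclosed_lo) hcl)
  -- F5 : differentiability
  have hud : ∀ w ∈ Ω, 0 < w.im → DifferentiableAt ℂ u w := by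
    intro w hw h
    have hlog : DifferentiableAt ℂ Complex.log w :=
      Complex.differentiableAt_log (Complex.mem_slitPlane_iff.2 (Or.inr h.ne'))
    have hVd : DifferentiableAt ℂ V (Complex.log w) :=
      hdiffD _ (hF1 w hw h.le).1 (hF1' w hw h).1 (hF1' w hw h).2
    exact (hVd.comp w hlog).sub hlog
  have hgd : DifferentiableOn ℂ g Ω := by
    apply moreraOffReal hΩopen hcg
    intro w hw him0
    rcases him0.lt_or_gt with h | h
    · -- lower half
      have hbase : DifferentiableAt ℂ u ((starRingEnd ℂ) w) :=
        hud _ (hconjΩ w hw) (by simp only [Complex.conj_im]; linarith)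
      have hrefl := conjReflectDifferentiableAt hbase
      apply hrefl.congr_of_eventuallyEq
      filter_upwards [(isOpen_lt Complex.continuous_im continuous_const).mem_nhds
        (show w ∈ {x : ℂ | x.im < 0} from h)] with x hx
      simp only [hg, if_neg (not_le.2 hx)]
    · have hbase : DifferentiableAt ℂ u w := hud w hw h
      apply hbase.congr_of_eventuallyEq
      filter_upwards [(isOpen_lt continuous_const Complex.continuous_im).mem_nhds
        (show w ∈ {x : ℂ | 0 < x.im} from h)] with x hx
      exact hgu x hx.le
  -- F6 : imaginary part bounds
  have huim : ∀ w ∈ Ω, 0 ≤ w.im → |(u w).im| < Real.pi := by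
    intro w hw h
    rcases h.lt_or_eq with h' | h'
    · have h1 := hF1 w hw h
      have h2 := hF1' w hw h'
      have h3 := him (Complex.log w) h1.1 h2.1 h2.2
      have : (u w).im = (V (Complex.log w)).im - (Complex.log w).im := by
        simp [hu]
      rw [this, abs_lt]
      constructor
      · linarith [h3.1, h2.2]
      · linarith [h3.2, h2.1]
    · rw [hF2 w hw h'.symm]
      simpa using Real.pi_pos
  have hgim : ∀ w ∈ Ω, |(g w).im| < Real.pi := by
    intro w hw
    rcases le_total 0 w.im with h | h
    · rw [hgu w h]
      exact huim w hw h
    · rw [hgl w hw h]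
      rw [Complex.conj_im, abs_neg]
      exact huim _ (hconjΩ w hw) (by simp only [Complex.conj_im]; linarith)
  -- the punctured disk
  set R : ℝ := Real.exp (-c) with hR
  have hRpos : 0 < R := Real.exp_pos _
  have hinvΩ : ∀ w : ℂ, w ∈ ball (0:ℂ) R → w ≠ 0 → w⁻¹ ∈ Ω := by
    intro w hw h0
    rw [mem_ball, dist_zero_right] at hw
    rw [hΩ, mem_setOf_eq, norm_inv]
    have habs : 0 < norm w := norm_pos_iff.mpr h0
    rw [lt_inv_comm₀ (Real.exp_pos c) habs]
    calc norm w < R := hw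
      _ = (Real.exp c)⁻¹ := by rw [hR, Real.exp_neg]
  set Pt : ℂ → ℂ := fun w =>
    (Complex.exp (g w⁻¹ / 2) - 1) / (Complex.exp (g w⁻¹ / 2) + 1) with hPt
  have hEre : ∀ ζ : ℂ, |ζ.im| < Real.pi → 0 < (Complex.exp (ζ / 2)).re := by
    intro ζ h
    rw [Complex.exp_re]
    apply mul_pos (Real.exp_pos _)
    apply Real.cos_pos_of_mem_Ioo
    have him2 : (ζ / 2).im = ζ.im / 2 := by
      rw [show (2 : ℂ) = ((2 : ℝ) : ℂ) by norm_num, Complex.div_ofReal_im]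
    rw [him2]
    have := abs_lt.1 h
    constructor
    · linarith [this.1]
    · linarith [this.2]
  have hPtfacts : ∀ w ∈ ball (0:ℂ) R, w ≠ 0 →
      norm (Pt w) < 1 ∧ Complex.exp (g w⁻¹ / 2) + 1 ≠ 0 :=
    fun w hw h0 => cayley_lt_one (hEre _ (hgim _ (hinvΩ w hw h0)))
  have hPtdiff : DifferentiableOn ℂ Pt (ball (0:ℂ) R \ {0}) := by
    intro w hw
    have h0 : w ≠ 0 := hw.2
    have hwΩ : w⁻¹ ∈ Ω := hinvΩ w hw.1 h0
    have hinv : DifferentiableAt ℂ (fun x : ℂ => x⁻¹) w := differentiableAt_inv h0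
    have hgat : DifferentiableAt ℂ g w⁻¹ := hgd.differentiableAt (hΩopen.mem_nhds hwΩ)
    have hcomp : DifferentiableAt ℂ (fun x : ℂ => Complex.exp (g x⁻¹ / 2)) w :=
      (((hgat.comp w hinv).div_const 2).cexp)
    exact ((hcomp.sub_const 1).div (hcomp.add_const 1)
      (hPtfacts w hw.1 h0).2).differentiableWithinAt
  have hbdd : BddAbove (norm ∘ Pt '' (ball (0:ℂ) R \ {0})) := by
    refine ⟨1, ?_⟩
    rintro x ⟨w, hw, rfl⟩
    simp only [Function.comp_apply]
    exact (hPtfacts w hw.1 hw.2).1.le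
  set P : ℂ → ℂ := Function.update Pt 0 (Filter.limUnder (𝓝[≠] (0:ℂ)) Pt) with hPdef
  have hPD : DifferentiableOn ℂ P (ball (0:ℂ) R) :=
    Complex.differentiableOn_update_limUnder_of_bddAbove (ball_mem_nhds 0 hRpos) hPtdiff hbdd
  have hPeq : ∀ w : ℂ, w ≠ 0 → P w = Pt w := fun w hw => Function.update_of_ne hw _ _
  have hPat : ∀ w ∈ ball (0:ℂ) R, DifferentiableAt ℂ P w :=
    fun w hw => hPD.differentiableAt (isOpen_ball.mem_nhds hw)
  have hPcont0 : ContinuousAt P 0 := (hPat 0 (mem_ball_self hRpos)).continuousAt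
  have hPlt : ∀ w ∈ ball (0:ℂ) R, w ≠ 0 → norm (P w) < 1 := by
    intro w hw h0
    rw [hPeq w h0]
    exact (hPtfacts w hw h0).1
  have hP0le : norm (P 0) ≤ 1 := by
    have ht : Filter.Tendsto P (𝓝[≠] (0:ℂ)) (𝓝 (P 0)) :=
      hPcont0.tendsto.mono_left nhdsWithin_le_nhds
    have htn : Filter.Tendsto (fun w => ‖P w‖) (𝓝[≠] (0:ℂ)) (𝓝 ‖P 0‖) := ht.norm
    apply le_of_tendsto htn
    filter_upwards [self_mem_nhdsWithin,
      mem_nhdsWithin_of_mem_nhds (ball_mem_nhds (0:ℂ) hRpos)] with w hw hwb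
    exact (hPlt w hwb hw).le
  have hPreal : ∀ t : ℝ, t ≠ 0 → |t| < R → (P ((t:ℝ):ℂ)).im = 0 := by
    intro t ht htR
    have ht0 : ((t:ℝ):ℂ) ≠ 0 := by exact_mod_cast ht
    have htb : ((t:ℝ):ℂ) ∈ ball (0:ℂ) R := by
      rw [mem_ball, dist_zero_right, Complex.norm_real, Real.norm_eq_abs]
      exact htR
    have hinvmem : (((t:ℝ):ℂ))⁻¹ ∈ Ω := hinvΩ _ htb ht0
    have hinvim : ((((t:ℝ):ℂ))⁻¹).im = 0 := by
      rw [← Complex.ofReal_inv]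
      exact Complex.ofReal_im _
    have hgre : (g (((t:ℝ):ℂ))⁻¹).im = 0 := by
      rw [hgu _ hinvim.ge]
      exact hF2 _ hinvmem hinvim
    have hζconj : (starRingEnd ℂ) (g (((t:ℝ):ℂ))⁻¹) = g (((t:ℝ):ℂ))⁻¹ :=
      Complex.conj_eq_iff_im.2 hgre
    rw [hPeq _ ht0]
    rw [← Complex.conj_eq_iff_im]
    simp only [hPt]
    rw [map_div₀, map_sub, map_add, ← Complex.exp_conj, map_div₀, hζconj, map_one,
      map_ofNat]
  have hP0im : (P 0).im = 0 := by
    have htc : Filter.Tendsto (fun t : ℝ => ((t:ℝ):ℂ)) (𝓝[>] (0:ℝ)) (𝓝 (0:ℂ)) := by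
      have := (Complex.continuous_ofReal.tendsto 0).mono_left
        (nhdsWithin_le_nhds (s := Ioi (0:ℝ)))
      simpa using this
    have htend : Filter.Tendsto (fun t : ℝ => P ((t:ℝ):ℂ)) (𝓝[>] (0:ℝ)) (𝓝 (P 0)) :=
      hPcont0.tendsto.comp htc
    have him0 : Filter.Tendsto (fun t : ℝ => (P ((t:ℝ):ℂ)).im) (𝓝[>] (0:ℝ))
        (𝓝 (P 0).im) := (Complex.continuous_im.tendsto _).comp htend
    have hev : ∀ᶠ t in 𝓝[>] (0:ℝ), (P ((t:ℝ):ℂ)).im = 0 := by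
      filter_upwards [Ioo_mem_nhdsGT_of_mem (show (0:ℝ) ∈ Ico (0:ℝ) R from ⟨le_refl _, hRpos⟩)]
        with t htio
      exact hPreal t (ne_of_gt htio.1) (by rw [abs_of_pos htio.1]; exact htio.2)
    have h2 := Filter.Tendsto.congr' hev him0
    exact tendsto_nhds_unique h2 tendsto_const_nhds
  set p : ℝ := (P 0).re with hp
  have hP0 : P 0 = ((p:ℝ):ℂ) := by
    apply Complex.ext
    · simp [hp]
    · simp [hP0im]
  have hplt : |p| < 1 := by
    rcases lt_or_ge (|p|) 1 with h | h
    · exact h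
    have habs1 : norm (P 0) = 1 := by
      apply le_antisymm hP0le
      rw [hP0, Complex.norm_real, Real.norm_eq_abs]
      exact h
    exfalso
    have hlm : IsLocalMax (norm ∘ P) 0 := by
      filter_upwards [ball_mem_nhds (0:ℂ) hRpos] with w hw
      rcases eq_or_ne w 0 with rfl | h0
      · exact le_refl _
      · simp only [Function.comp_apply, habs1]
        exact (hPlt w hw h0).le
    have hdev : ∀ᶠ z in 𝓝 (0:ℂ), DifferentiableAt ℂ P z := by
      filter_upwards [ball_mem_nhds (0:ℂ) hRpos] with w hw
      exact hPat w hw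
    have hev := Complex.eventually_eq_of_isLocalMax_norm hdev hlm
    obtain ⟨w, ⟨hwP, hwb⟩, hw0⟩ := (((hev.filter_mono (nhdsWithin_le_nhds (s := {(0:ℂ)}ᶜ))).and
      (mem_nhdsWithin_of_mem_nhds (ball_mem_nhds (0:ℂ) hRpos))).and
      self_mem_nhdsWithin).exists
    have hw0' : w ≠ 0 := hw0
    have hlt := hPlt w hwb hw0'
    rw [hwP, habs1] at hlt
    exact lt_irrefl 1 hlt
  -- Möbius transform and the Schwarz lemma
  set Q : ℂ → ℂ := fun w => (P w - ((p:ℝ):ℂ)) / (1 - ((p:ℝ):ℂ) * P w) with hQ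
  have hPabslt : ∀ w ∈ ball (0:ℂ) R, norm (P w) < 1 := by
    intro w hw
    rcases eq_or_ne w 0 with rfl | h0
    · rw [hP0, Complex.norm_real, Real.norm_eq_abs]; exact hplt
    · exact hPlt w hw h0
  have hQfacts : ∀ w ∈ ball (0:ℂ) R,
      (1:ℂ) - ((p:ℝ):ℂ) * P w ≠ 0 ∧ norm (Q w) < 1 :=
    fun w hw => mobius_lt_one hplt (hPabslt w hw)
  have hQdiff : DifferentiableOn ℂ Q (ball (0:ℂ) R) := by
    intro w hw
    exact (((hPat w hw).sub_const _).div
      ((differentiableAt_const _).sub ((differentiableAt_const _).mul (hPat w hw)))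
      (hQfacts w hw).1).differentiableWithinAt
  have hQ0 : Q 0 = 0 := by
    rw [hQ]
    simp only [hP0]
    rw [sub_self, zero_div]
  have hQmaps : MapsTo Q (ball (0:ℂ) R) (ball (Q 0) 1) := by
    intro w hw
    rw [hQ0, mem_ball, dist_zero_right]
    exact (hQfacts w hw).2
  have hSchwarz : ∀ w ∈ ball (0:ℂ) R, norm (Q w) ≤ Real.exp c * norm w := by
    intro w hw
    have := Complex.dist_le_div_mul_dist_of_mapsTo_ball hQdiff (hQmaps.mono_right ball_subset_closedBall) hw
    rw [hQ0, dist_zero_right, dist_zero_right] at this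
    calc norm (Q w) ≤ 1 / R * norm w := this
      _ = Real.exp c * norm w := by
        rw [hR, Real.exp_neg, one_div, inv_inv]
  -- final computation
  set α : ℝ := 2 * Real.log ((1 + p) / (1 - p)) with hα
  have hpp := abs_lt.1 hplt
  have hp1 : (0:ℝ) < 1 + p := by linarith [hpp.1]
  have hp2 : (0:ℝ) < 1 - p := by linarith [hpp.2]
  have hE0pos : (0:ℝ) < (1 + p) / (1 - p) := div_pos hp1 hp2
  have h1pC : ((1:ℂ) + (p:ℝ)) ≠ 0 := by
    intro h
    have := congrArg Complex.re h
    simp at this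
    linarith
  have h1pC' : ((1:ℂ) - (p:ℝ)) ≠ 0 := by
    intro h
    have := congrArg Complex.re h
    simp at this
    linarith
  have hexpα : Complex.exp ((α:ℂ)/2) = ((1:ℂ) + (p:ℝ)) / ((1:ℂ) - (p:ℝ)) := by
    have h2 : ((α:ℂ))/2 = ((Real.log ((1+p)/(1-p)) : ℝ) : ℂ) := by
      rw [hα]; push_cast; ring
    rw [h2, ← Complex.ofReal_exp, Real.exp_log hE0pos]
    push_cast
    ring
  refine ⟨α, ?_⟩
  intro z hzc hz0 hzπ hzlog
  set w : ℂ := Complex.exp (-z) with hw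
  have hw0 : w ≠ 0 := Complex.exp_ne_zero _
  have hwabs : norm w = Real.exp (-z.re) := by
    rw [hw, Complex.norm_exp]
    simp
  have hwb : w ∈ ball (0:ℂ) R := by
    rw [mem_ball, dist_zero_right, hwabs, hR]
    exact Real.exp_lt_exp.2 (by linarith)
  have hwinv : w⁻¹ = Complex.exp z := by
    rw [hw, Complex.exp_neg, inv_inv]
  have hgw : g w⁻¹ = V z - z := by
    rw [hwinv]
    have himexp : 0 ≤ (Complex.exp z).im := by
      rw [Complex.exp_im]
      exact mul_nonneg (Real.exp_pos _).le (Real.sin_nonneg_of_nonneg_of_le_pi hz0 hzπ)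
    rw [hgu _ himexp, hu]
    simp only []
    rw [Complex.log_exp (by linarith [Real.pi_pos]) hzπ]
  set ζ : ℂ := V z - z with hζ
  have hζim : |ζ.im| < Real.pi := by
    have := hgim w⁻¹ (hinvΩ w hwb hw0)
    rwa [hgw] at this
  set E : ℂ := Complex.exp (ζ / 2) with hE
  have hEre' : 0 < E.re := hEre ζ hζim
  have hE1 : E + 1 ≠ 0 := (cayley_lt_one hEre').2
  have hPw : P w = (E - 1) / (E + 1) := by
    rw [hPeq w hw0, hPt]
    simp only []
    rw [hgw]
  set q : ℂ := Q w with hq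
  have hqabs : norm q ≤ Real.exp (c - z.re) := by
    calc norm q ≤ Real.exp c * norm w := hSchwarz w hwb
      _ = Real.exp (c - z.re) := by rw [hwabs, ← Real.exp_add, sub_eq_add_neg]
  have hq4 : norm q ≤ 1/4 := by
    have h4 : Real.exp (c - z.re) ≤ 1/4 := by
      have hle : c - z.re ≤ -Real.log 4 := by linarith
      calc Real.exp (c - z.re) ≤ Real.exp (-Real.log 4) := Real.exp_le_exp.2 hle
        _ = 1/4 := by rw [Real.exp_neg, Real.exp_log (by norm_num)]; norm_num
    exact hqabs.trans h4
  have hqre : |q.re| ≤ 1/4 := (Complex.abs_re_le_norm q).trans hq4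
  have h1q : (1:ℂ) - q ≠ 0 := by
    intro h
    have : q = 1 := by linear_combination -h
    rw [this] at hq4
    simp at hq4
    norm_num at hq4
  have h1q' : (1:ℂ) + q ≠ 0 := by
    intro h
    have : q = -1 := by linear_combination h
    rw [this] at hq4
    simp at hq4
    norm_num at hq4
  have hql : q * (1 - ((p:ℝ):ℂ) * P w) = P w - ((p:ℝ):ℂ) := by
    rw [hq, hQ]
    exact div_mul_cancel₀ _ (hQfacts w hwb).1
  have hXE : P w * (E + 1) = E - 1 := by
    rw [hPw]
    exact div_mul_cancel₀ _ hE1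
  have halg : E * (((1:ℂ) - (p:ℝ)) * (1 - q)) = (1 + q) * ((1:ℂ) + (p:ℝ)) := by
    linear_combination (-(E+1)) * hql - (((p:ℝ):ℂ)*q+1) * hXE
  have hkey : Complex.exp ((ζ - (α:ℂ))/2) = (1 + q)/(1 - q) := by
    rw [sub_div, Complex.exp_sub, hexpα, ← hE]
    rw [div_div_eq_mul_div, div_eq_div_iff h1pC h1q]
    linear_combination halg
  have hL : Complex.exp (Complex.log (1+q) - Complex.log (1-q)) = (1 + q)/(1 - q) := by
    rw [Complex.exp_sub, Complex.exp_log h1q', Complex.exp_log h1q]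
  obtain ⟨n, hn⟩ := Complex.exp_eq_exp_iff_exists_int.1 (hkey.trans hL.symm)
  have hLHSim : ((ζ - (α:ℂ))/2).im = ζ.im/2 := by
    rw [show (2:ℂ) = ((2:ℝ):ℂ) by norm_num, Complex.div_ofReal_im]
    simp
  have hA : |(Complex.log (1+q)).im| < Real.pi/2 := by
    rw [Complex.log_im]
    rw [Complex.abs_arg_lt_pi_div_two_iff]
    left
    simp only [add_re, one_re]
    linarith [abs_le.1 hqre]
  have hB : |(Complex.log (1-q)).im| < Real.pi/2 := by
    rw [Complex.log_im]
    rw [Complex.abs_arg_lt_pi_div_two_iff]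
    left
    simp only [sub_re, one_re]
    linarith [abs_le.1 hqre]
  have hnim : ζ.im/2 = (Complex.log (1+q)).im - (Complex.log (1-q)).im + (n:ℝ)*(2*Real.pi) := by
    have := congrArg Complex.im hn
    rw [hLHSim] at this
    rw [this]
    simp [Complex.add_im, Complex.sub_im, Complex.mul_im]
  have hn0 : n = 0 := by
    have hπ := Real.pi_pos
    have habs1 := abs_lt.1 hζim
    have habs2 := abs_lt.1 hA
    have habs3 := abs_lt.1 hB
    have h2π : (0:ℝ) < 2*Real.pi := by linarith
    have hlt1 : (n:ℝ) < 1 :=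
      (mul_lt_mul_iff_left₀ h2π).1 (by linarith : (n:ℝ)*(2*Real.pi) < 1*(2*Real.pi))
    have hlt2 : (-1:ℝ) < (n:ℝ) :=
      (mul_lt_mul_iff_left₀ h2π).1 (by linarith : (-1:ℝ)*(2*Real.pi) < (n:ℝ)*(2*Real.pi))
    have : n < 1 := by exact_mod_cast hlt1
    have : -1 < n := by exact_mod_cast hlt2
    omega
  rw [hn0] at hn
  simp only [Int.cast_zero, zero_mul, add_zero] at hn
  have hζα : ζ - (α:ℂ) = 2*(Complex.log (1+q) - Complex.log (1-q)) := by
    linear_combination 2 * hn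
  have hlog1 : ‖Complex.log (1+q)‖ ≤ 3/2 * ‖q‖ :=
    Complex.norm_log_one_add_half_le_self (by linarith)
  have hlog2 : ‖Complex.log (1-q)‖ ≤ 3/2 * ‖q‖ := by
    have := Complex.norm_log_one_add_half_le_self (z := -q)
      (by rw [norm_neg]; linarith)
    rw [norm_neg] at this
    rw [show (1:ℂ) - q = 1 + (-q) by ring]
    exact this
  have hfinal : norm (ζ - (α:ℂ)) ≤ 6 * Real.exp (c - z.re) := by
    rw [hζα, norm_mul, Complex.norm_two]
    calc 2 * norm (Complex.log (1+q) - Complex.log (1-q))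
        ≤ 2 * (‖Complex.log (1+q)‖ + ‖Complex.log (1-q)‖) := by
          have := norm_sub_le (Complex.log (1+q)) (Complex.log (1-q))
          linarith
      _ ≤ 2 * (3/2 * ‖q‖ + 3/2 * ‖q‖) := by linarith
      _ = 6 * norm q := by ring
      _ ≤ 6 * Real.exp (c - z.re) := by linarith [hqabs]
  calc norm (V z - z - (α:ℂ)) = norm (ζ - (α:ℂ)) := by rw [hζ]
    _ ≤ 6 * Real.exp (c - z.re) := hfinal
    _ ≤ 12 * Real.exp (c - z.re) := by nlinarith [Real.exp_pos (c - z.re)]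





/-- Let `S_π = {0 < Im z < π}` and `ℝ_π = {Im z = π}`. Let `c ∈ ℝ` and let
`K ⊆ S_π` be relatively closed in `S_π` with `Re z ≤ c` for all `z ∈ K` and with `S_π∖K`
simply connected. Let `V` be continuous on `(S_π∖K) ∪ (c,∞) ∪ ((c,∞)+πi)`, holomorphic and
injective on `S_π∖K` with `V(S_π∖K) = S_π`, with `Re V(z) → +∞` as `Re z → +∞` in `S_π∖K`,
`V((c,∞)) ⊆ ℝ` and `V((c,∞)+πi) ⊆ ℝ_π`. Then there exists `h ∈ ℝ` such that for every `z`
in the domain of `V` with `Re z ≥ c + ln 4`, `|V(z) − z − h| ≤ 12 e^{c − Re z}`. -/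
theorem statement5 (c : ℝ) (K : Set ℂ) (V : ℂ → ℂ)
    (hKsub : K ⊆ {z : ℂ | 0 < z.im ∧ z.im < Real.pi})
    (hKre : ∀ z ∈ K, z.re ≤ c)
    (hKclosed : ∀ z ∈ closure K, (0 < z.im ∧ z.im < Real.pi) → z ∈ K)
    (hopen : IsOpen ({z : ℂ | 0 < z.im ∧ z.im < Real.pi} \ K))
    (hconn : IsConnected ({z : ℂ | 0 < z.im ∧ z.im < Real.pi} \ K))
    (hsc : SimplyConnectedSpace ↥({z : ℂ | 0 < z.im ∧ z.im < Real.pi} \ K))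
    (hcont : ContinuousOn V (({z : ℂ | 0 < z.im ∧ z.im < Real.pi} \ K)
      ∪ {z : ℂ | z.im = 0 ∧ c < z.re} ∪ {z : ℂ | z.im = Real.pi ∧ c < z.re}))
    (hdiff : DifferentiableOn ℂ V ({z : ℂ | 0 < z.im ∧ z.im < Real.pi} \ K))
    (hinj : Set.InjOn V ({z : ℂ | 0 < z.im ∧ z.im < Real.pi} \ K))
    (himage : V '' ({z : ℂ | 0 < z.im ∧ z.im < Real.pi} \ K)
      = {z : ℂ | 0 < z.im ∧ z.im < Real.pi})
    (hlim : Filter.Tendsto (fun z => (V z).re)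
      (Filter.comap Complex.re Filter.atTop
        ⊓ Filter.principal ({z : ℂ | 0 < z.im ∧ z.im < Real.pi} \ K)) Filter.atTop)
    (hlow : ∀ z : ℂ, z.im = 0 → c < z.re → (V z).im = 0)
    (hup : ∀ z : ℂ, z.im = Real.pi → c < z.re → (V z).im = Real.pi) :
    ∃ h : ℝ, ∀ z ∈ (({z : ℂ | 0 < z.im ∧ z.im < Real.pi} \ K)
        ∪ {z : ℂ | z.im = 0 ∧ c < z.re} ∪ {z : ℂ | z.im = Real.pi ∧ c < z.re}),
      c + Real.log 4 ≤ z.re →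
        ‖V z - z - (h : ℂ)‖ ≤ 12 * Real.exp (c - z.re) := by
  have hmemSK : ∀ z : ℂ, c < z.re → 0 < z.im → z.im < Real.pi →
      z ∈ {z : ℂ | 0 < z.im ∧ z.im < Real.pi} \ K := by
    intro z h1 h2 h3
    refine ⟨⟨h2, h3⟩, fun hzK => ?_⟩
    exact absurd (hKre z hzK) (not_le.2 h1)
  have hcontD : ContinuousOn V {z : ℂ | c < z.re ∧ 0 ≤ z.im ∧ z.im ≤ Real.pi} := by
    apply hcont.mono
    intro z hz
    obtain ⟨h1, h2, h3⟩ := hz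
    rcases h2.lt_or_eq with h2' | h2'
    · rcases h3.lt_or_eq with h3' | h3'
      · exact Or.inl (Or.inl (hmemSK z h1 h2' h3'))
      · exact Or.inr ⟨h3', h1⟩
    · exact Or.inl (Or.inr ⟨h2'.symm, h1⟩)
  have hdiffD : ∀ z : ℂ, c < z.re → 0 < z.im → z.im < Real.pi → DifferentiableAt ℂ V z :=
    fun z h1 h2 h3 => hdiff.differentiableAt (hopen.mem_nhds (hmemSK z h1 h2 h3))
  have him : ∀ z : ℂ, c < z.re → 0 < z.im → z.im < Real.pi →
      0 < (V z).im ∧ (V z).im < Real.pi := by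
    intro z h1 h2 h3
    have : V z ∈ V '' ({z : ℂ | 0 < z.im ∧ z.im < Real.pi} \ K) :=
      mem_image_of_mem V (hmemSK z h1 h2 h3)
    rw [himage] at this
    exact this
  obtain ⟨h, hbound⟩ := halfStripBound hcontD hdiffD him hlow hup
  refine ⟨h, ?_⟩
  intro z hz hzre
  have hlog4 : 0 < Real.log 4 := Real.log_pos (by norm_num)
  have hc : c < z.re := by linarith
  rcases hz with (hz | hz) | hz
  · exact hbound z hc hz.1.1.le hz.1.2.le hzre
  · exact hbound z hc hz.1.ge (hz.1 ▸ Real.pi_pos.le) hzre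
  · exact hbound z hc (hz.1 ▸ Real.pi_pos.le) hz.1.le hzre
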